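/- arXiv:2105.09708 — 2 statements merged into one kernel-verified Lean document; each statement's English description precedes it below -/
import Mathlib

section
/- Let (X,T) be a topological dynamical system such that there exist a compact metric space Y and continuous surjections R: X → Y and S: Y → X with T = S ∘ R. Then dim(X̃_T) ≤ dim Y. -/
open scoped ENNReal Classical

section MeanDimDefs

variable {X : Type*}

/-- A finite open cover of `X`. -/
def IsFinOpenCover [TopologicalSpace X] (α : Finset (Set X)) : Prop :=
  (∀ A ∈ α, IsOpen A) ∧ ⋃₀ (α : Set (Set X)) = Set.univ

/-- `β` refines `α`: every element of `β` is contained in some element of `α`. -/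
def Refines (β α : Finset (Set X)) : Prop :=
  ∀ B ∈ β, ∃ A ∈ α, B ⊆ A

/-- The order of a finite cover: `sup_x (Σ_A 1_A(x)) - 1`. -/
noncomputable def ordCover (α : Finset (Set X)) : ℕ :=
  (⨆ x : X, (α.filter fun A => x ∈ A).card) - 1

/-- `D(α)`: the minimal order of a finite open cover refining `α`. -/
noncomputable def Dcover [TopologicalSpace X] (α : Finset (Set X)) : ℕ :=
  sInf {n | ∃ β : Finset (Set X), IsFinOpenCover β ∧ Refines β α ∧ ordCover β = n}

/-- The joint `α ∨ β = {U ∩ V : U ∈ α, V ∈ β}`. -/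
noncomputable def jointCover (α β : Finset (Set X)) : Finset (Set X) :=
  (α ×ˢ β).image fun p => p.1 ∩ p.2

/-- The preimage cover `T⁻¹ α`. -/
noncomputable def preimCover (T : X → X) (α : Finset (Set X)) : Finset (Set X) :=
  α.image fun A => T ⁻¹' A

/-- `dynCover T α n = ⋁_{i=0}^{n} T^{-i} α`. -/
noncomputable def dynCover (T : X → X) (α : Finset (Set X)) : ℕ → Finset (Set X)
  | 0 => α
  | n + 1 => jointCover α (preimCover T (dynCover T α n))

/-- Mean dimension relative to a cover:
`mdim(X,T,α) = lim_n D(⋁_{i=0}^{n-1} T^{-i}α)/n = inf_n D(⋁_{i=0}^{n-1} T^{-i}α)/n`. -/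
noncomputable def mdimCover [TopologicalSpace X] (T : X → X) (α : Finset (Set X)) : ℝ≥0∞ :=
  ⨅ n : ℕ, (Dcover (dynCover T α n) : ℝ≥0∞) / (n + 1)

/-- Mean topological dimension. -/
noncomputable def mdim (X : Type*) [TopologicalSpace X] (T : X → X) : ℝ≥0∞ :=
  ⨆ (α : Finset (Set X)) (_ : IsFinOpenCover α), mdimCover T α

/-- Topological (covering) dimension, `dim X = sup_α D(α)`. -/
noncomputable def covDim (X : Type*) [TopologicalSpace X] : ℝ≥0∞ :=
  ⨆ (α : Finset (Set X)) (_ : IsFinOpenCover α), (Dcover α : ℝ≥0∞)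

/-- Stable topological dimension `stabdim X = lim_n dim(X^n)/n = inf_n dim(X^n)/n`. -/
noncomputable def stabdim (X : Type*) [TopologicalSpace X] : ℝ≥0∞ :=
  ⨅ n : ℕ, covDim (Fin (n + 1) → X) / ((n : ℝ≥0∞) + 1)

end MeanDimDefs
section NatExtDefs

variable {X : Type*}

/-- The natural extension space `X̃_T ⊆ X^ℕ`. -/
def natExtSet (T : X → X) : Set (ℕ → X) := {x | ∀ k, T (x (k + 1)) = x k}

/-- The natural extension map `T̃ : (x_k)_k ↦ (T x_0, x_0, x_1, …)`. -/
def natExtMap (T : X → X) : ↥(natExtSet T) → ↥(natExtSet T) := fun x =>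
  ⟨fun k => Nat.rec (T (x.1 0)) (fun k _ => x.1 k) k, by
    intro k
    cases k with
    | zero => rfl
    | succ k => exact x.2 k⟩

end NatExtDefs

lemma refines_trans {X : Type*} {γ β α : Finset (Set X)} (h1 : Refines γ β)
    (h2 : Refines β α) : Refines γ α := by
  intro B hB
  obtain ⟨C, hC, hBC⟩ := h1 B hB
  obtain ⟨A, hA, hCA⟩ := h2 C hC
  exact ⟨A, hA, hBC.trans hCA⟩

lemma isFinOpenCover_pullback {Z Y : Type*} [TopologicalSpace Z] [TopologicalSpace Y]
    {f : Z → Y} (hf : Continuous f) {β : Finset (Set Y)} (hβ : IsFinOpenCover β) :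
    IsFinOpenCover (β.image fun V => f ⁻¹' V) := by
  constructor
  · intro A hA
    obtain ⟨V, hV, rfl⟩ := Finset.mem_image.mp hA
    exact (hβ.1 V hV).preimage hf
  · ext z
    simp only [Set.mem_sUnion, Set.mem_univ, iff_true]
    have hz : f z ∈ ⋃₀ (β : Set (Set Y)) := by rw [hβ.2]; trivial
    obtain ⟨V, hV, hzV⟩ := hz
    exact ⟨f ⁻¹' V, Finset.mem_coe.mpr (Finset.mem_image_of_mem _ hV), hzV⟩

lemma ordCover_pullback_le {Z Y : Type*} {f : Z → Y} (β : Finset (Set Y)) :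
    ordCover (β.image fun V => f ⁻¹' V) ≤ ordCover β := by
  apply Nat.sub_le_sub_right
  apply ciSup_le'
  intro z
  have h1 : ((β.image fun V => f ⁻¹' V).filter fun A => z ∈ A) ⊆
      (β.filter fun V => f z ∈ V).image fun V => f ⁻¹' V := by
    intro A hA
    simp only [Finset.mem_filter, Finset.mem_image] at hA ⊢
    obtain ⟨⟨V, hV, rfl⟩, hz⟩ := hA
    exact ⟨V, ⟨hV, hz⟩, rfl⟩
  calc ((β.image fun V => f ⁻¹' V).filter fun A => z ∈ A).card
      ≤ ((β.filter fun V => f z ∈ V).image fun V => f ⁻¹' V).card := Finset.card_le_card h1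
    _ ≤ (β.filter fun V => f z ∈ V).card := Finset.card_image_le
    _ ≤ ⨆ y : Y, (β.filter fun V => y ∈ V).card := by
        refine le_ciSup (f := fun y : Y => (β.filter fun V => y ∈ V).card) ⟨β.card, ?_⟩ (f z)
        rintro n ⟨y, rfl⟩
        exact Finset.card_filter_le _ _

lemma Dcover_le_of_refines {Z : Type*} [TopologicalSpace Z] {β α : Finset (Set Z)}
    (hβ : IsFinOpenCover β) (h : Refines β α) : Dcover α ≤ Dcover β := by
  have hne : {n | ∃ γ : Finset (Set Z), IsFinOpenCover γ ∧ Refines γ β ∧ ordCover γ = n}.Nonempty :=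
    ⟨ordCover β, β, hβ, fun B hB => ⟨B, hB, subset_rfl⟩, rfl⟩
  obtain ⟨γ, hγ, hγβ, hord⟩ := Nat.sInf_mem hne
  exact le_of_le_of_eq (Nat.sInf_le ⟨γ, hγ, refines_trans hγβ h, rfl⟩) hord

lemma Dcover_pullback_le {Z Y : Type*} [TopologicalSpace Z] [TopologicalSpace Y]
    {f : Z → Y} (hf : Continuous f) {β : Finset (Set Y)} (hβ : IsFinOpenCover β) :
    Dcover (β.image fun V => f ⁻¹' V) ≤ Dcover β := by
  have hne : {n | ∃ γ : Finset (Set Y), IsFinOpenCover γ ∧ Refines γ β ∧ ordCover γ = n}.Nonempty :=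
    ⟨ordCover β, β, hβ, fun B hB => ⟨B, hB, subset_rfl⟩, rfl⟩
  obtain ⟨γ, hγ, hγβ, hord⟩ := Nat.sInf_mem hne
  have href : Refines (γ.image fun V => f ⁻¹' V) (β.image fun V => f ⁻¹' V) := by
    intro B hB
    obtain ⟨C, hC, rfl⟩ := Finset.mem_image.mp hB
    obtain ⟨V, hV, hCV⟩ := hγβ C hC
    exact ⟨f ⁻¹' V, Finset.mem_image_of_mem _ hV, Set.preimage_mono hCV⟩
  calc Dcover (β.image fun V => f ⁻¹' V)
      ≤ ordCover (γ.image fun V => f ⁻¹' V) :=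
        Nat.sInf_le ⟨γ.image fun V => f ⁻¹' V, isFinOpenCover_pullback hf hγ, href, rfl⟩
    _ ≤ ordCover γ := ordCover_pullback_le γ
    _ = Dcover β := hord

lemma natExt_coord {X : Type*} {T : X → X} (z : ↥(natExtSet T)) (k m : ℕ) :
    T^[m] (z.1 (k + m)) = z.1 k := by
  induction m with
  | zero => rfl
  | succ m ih =>
    rw [Function.iterate_succ_apply]
    have h := z.2 (k + m)
    rw [show k + (m+1) = (k+m)+1 from rfl, h]
    exact ih

lemma natExtSet_isClosed {X : Type*} [TopologicalSpace X] [T2Space X] {T : X → X}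
    (hT : Continuous T) : IsClosed (natExtSet T) := by
  have h : natExtSet T = ⋂ k, {x : ℕ → X | T (x (k+1)) = x k} := by
    ext x; simp [natExtSet, Set.mem_iInter]
  rw [h]
  exact isClosed_iInter fun k =>
    isClosed_eq (hT.comp (continuous_apply (k+1))) (continuous_apply k)

lemma exists_coord_cover {X Y : Type*} [TopologicalSpace X] [CompactSpace X]
    [TopologicalSpace.MetrizableSpace X] [MetricSpace Y] [CompactSpace Y]
    (R : X → Y) (S : Y → X) (hR : Continuous R) (hS : Continuous S)
    (hZne : Nonempty ↥(natExtSet (S ∘ R)))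
    (α : Finset (Set ↥(natExtSet (S ∘ R)))) (hα : IsFinOpenCover α) :
    ∃ (f : ↥(natExtSet (S ∘ R)) → Y) (β : Finset (Set Y)), Continuous f ∧
      IsFinOpenCover β ∧ Refines (β.image fun V => f ⁻¹' V) α := by
  have hT : Continuous (S ∘ R) := hS.comp hR
  haveI : CompactSpace ↥(natExtSet (S ∘ R)) :=
    isCompact_iff_compactSpace.mp ((natExtSet_isClosed hT).isCompact)
  -- basic data for every point
  have hcov : ∀ z : ↥(natExtSet (S ∘ R)), ∃ (A : Set ↥(natExtSet (S ∘ R))) (I : Finset ℕ) (u : ℕ → Set X),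
      A ∈ α ∧ (∀ i ∈ I, IsOpen (u i) ∧ z.1 i ∈ u i) ∧
      (Subtype.val ⁻¹' ((I : Set ℕ).pi u) ⊆ A) ∧
      z ∈ (Subtype.val ⁻¹' ((I : Set ℕ).pi u) : Set ↥(natExtSet (S ∘ R))) := by
    intro z
    have hz : z ∈ ⋃₀ (α : Set (Set ↥(natExtSet (S ∘ R)))) := by rw [hα.2]; trivial
    obtain ⟨A, hA, hzA⟩ := hz
    obtain ⟨A', hA', hval⟩ := isOpen_induced_iff.mp (hα.1 A hA)
    have hz' : z.1 ∈ A' := by rw [← hval] at hzA; exact hzA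
    obtain ⟨I, u, hu, hsub⟩ := isOpen_pi_iff.mp hA' z.1 hz'
    refine ⟨A, I, u, hA, hu, ?_, ?_⟩
    · intro w hw; rw [← hval]; exact hsub hw
    · intro i hi; exact (hu i hi).2
  choose A I u hA hu hsub hmem using hcov
  set O : ↥(natExtSet (S ∘ R)) → Set ↥(natExtSet (S ∘ R)) := fun z => Subtype.val ⁻¹' ((I z : Set ℕ).pi (u z)) with hO
  have hOopen : ∀ z, IsOpen (O z) := fun z =>
    (isOpen_set_pi (I z).finite_toSet fun i hi => (hu z i hi).1).preimage continuous_subtype_val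
  obtain ⟨t, ht⟩ := isCompact_univ.elim_finite_subcover O hOopen
    (fun z _ => Set.mem_iUnion.mpr ⟨z, hmem z⟩)
  set N : ℕ := (t.sup fun z => (I z).sup id) + 1 with hN
  have hklt : ∀ z ∈ t, ∀ k ∈ I z, k < N := by
    intro z hz k hk
    have : k ≤ t.sup fun z => (I z).sup id :=
      le_trans (Finset.le_sup (f := id) hk) (Finset.le_sup (f := fun z => (I z).sup id) hz)
    omega
  set f : ↥(natExtSet (S ∘ R)) → Y := fun z => R (z.1 N) with hf
  have hfc : Continuous f := hR.comp ((continuous_apply N).comp continuous_subtype_val)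
  have hkey : ∀ z : ↥(natExtSet (S ∘ R)), ∀ k, k < N → (S ∘ R)^[N - 1 - k] (S (f z)) = z.1 k := by
    intro z k hk
    have hN1 : N - 1 + 1 = N := by omega
    have h1 : S (f z) = z.1 (N - 1) := by
      have h := z.2 (N - 1)
      rw [hN1] at h
      exact h
    rw [h1]
    have h2 : k + (N - 1 - k) = N - 1 := by omega
    have h3 := natExt_coord z k (N - 1 - k)
    rwa [h2] at h3
  set V : ↥(natExtSet (S ∘ R)) → Set Y := fun x => ⋂ k ∈ I x, (fun y => (S ∘ R)^[N - 1 - k] (S y)) ⁻¹' (u x k) with hV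
  have hVopen : ∀ x, IsOpen (V x) :=
    fun x => isOpen_biInter_finset fun k hk => ((hu x k hk).1).preimage ((hT.iterate _).comp hS)
  have hpre : ∀ x ∈ t, f ⁻¹' (V x) = O x := by
    intro x hx
    ext z
    simp only [Set.mem_preimage, hV, Set.mem_iInter, hO, Set.mem_pi, Finset.mem_coe]
    constructor
    · intro h k hk
      have := h k hk
      rwa [hkey z k (hklt x hx k hk)] at this
    · intro h k hk
      rw [hkey z k (hklt x hx k hk)]
      exact h k hk
  set W : Set Y := (Set.range f)ᶜ with hW
  have hWopen : IsOpen W := (isCompact_range hfc).isClosed.isOpen_compl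
  refine ⟨f, insert W (t.image V), hfc, ⟨?_, ?_⟩, ?_⟩
  · intro B hB
    rcases Finset.mem_insert.mp hB with rfl | hB
    · exact hWopen
    · obtain ⟨x, _, rfl⟩ := Finset.mem_image.mp hB
      exact hVopen x
  · ext y
    simp only [Set.mem_sUnion, Set.mem_univ, iff_true]
    by_cases hy : y ∈ Set.range f
    · obtain ⟨z, rfl⟩ := hy
      have hz : z ∈ ⋃ x ∈ t, O x := ht (Set.mem_univ z)
      obtain ⟨x, hx, hzx⟩ := Set.mem_iUnion₂.mp hz
      refine ⟨V x, ?_, ?_⟩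
      · exact Finset.mem_coe.mpr (Finset.mem_insert_of_mem (Finset.mem_image_of_mem _ hx))
      · rw [← Set.mem_preimage, hpre x hx]; exact hzx
    · exact ⟨W, Finset.mem_coe.mpr (Finset.mem_insert_self _ _), hy⟩
  · intro B hB
    obtain ⟨V', hV', rfl⟩ := Finset.mem_image.mp hB
    rcases Finset.mem_insert.mp hV' with rfl | hV'
    · -- preimage of W is empty
      obtain ⟨z0⟩ := hZne
      have hz0 : z0 ∈ ⋃₀ (α : Set (Set ↥(natExtSet (S ∘ R)))) := by rw [hα.2]; trivial
      obtain ⟨A0, hA0, _⟩ := hz0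
      refine ⟨A0, hA0, ?_⟩
      intro z hz
      exact absurd (Set.mem_range_self z) hz
    · obtain ⟨x, hx, rfl⟩ := Finset.mem_image.mp hV'
      exact ⟨A x, hA x, by rw [hpre x hx]; exact hsub x⟩

/-- if `T = S ∘ R` with `R : X → Y`, `S : Y → X` continuous surjections and
`Y` a compact metric space, then `dim(X̃_T) ≤ dim Y`. -/
theorem covDim_natExt_le_of_factor {X Y : Type*} [TopologicalSpace X] [CompactSpace X]
    [TopologicalSpace.MetrizableSpace X] [MetricSpace Y] [CompactSpace Y]
    (R : X → Y) (S : Y → X) (hR : Continuous R) (hS : Continuous S)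
    (hRs : Function.Surjective R) (hSs : Function.Surjective S) :
    covDim ↥(natExtSet (S ∘ R)) ≤ covDim Y := by
  refine iSup₂_le fun α hα => ?_
  by_cases hZ : Nonempty ↥(natExtSet (S ∘ R))
  · obtain ⟨f, β, hfc, hβ, href⟩ := exists_coord_cover R S hR hS hZ α hα
    have h1 : Dcover α ≤ Dcover β :=
      (Dcover_le_of_refines (isFinOpenCover_pullback hfc hβ) href).trans
        (Dcover_pullback_le hfc hβ)
    calc (Dcover α : ℝ≥0∞) ≤ (Dcover β : ℝ≥0∞) := Nat.cast_le.mpr h1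
      _ ≤ covDim Y := le_iSup₂_of_le β hβ le_rfl
  · haveI : IsEmpty ↥(natExtSet (S ∘ R)) := not_nonempty_iff.mp hZ
    have h0 : Dcover α = 0 := by
      refine Nat.le_zero.mp (Nat.sInf_le ⟨∅, ⟨?_, ?_⟩, ?_, ?_⟩)
      · intro A hA; exact absurd hA (Finset.notMem_empty A)
      · rw [Finset.coe_empty, Set.sUnion_empty]
        exact (Set.univ_eq_empty_iff.mpr (not_nonempty_iff.mp hZ)).symm
      · intro B hB; exact absurd hB (Finset.notMem_empty B)
      · simp [ordCover, ciSup_of_empty]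
    simp only [h0, Nat.cast_zero]
    exact zero_le
end

section
/- Let (X,T) be a topological dynamical system with closed subsets Y, Z of X such that X = Y ∪ Z and T(Z) ⊆ Z. Then dim(X̃_T) ≤ max(dim Y, dim(⋂_{n∈ℕ} T^n Z)). -/
open scoped ENNReal Classical

set_option linter.unusedSectionVars false
section CoverHelpers

variable {A : Type*} [TopologicalSpace A]

lemma count_le_of_ordCover_le {β : Finset (Set A)} {d : ℕ} (h : ordCover β ≤ d) (x : A) :
    (β.filter fun B => x ∈ B).card ≤ d + 1 := by
  have hb : BddAbove (Set.range fun y : A => (β.filter fun B => y ∈ B).card) := by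
    refine ⟨β.card, ?_⟩
    rintro _ ⟨y, rfl⟩
    exact Finset.card_filter_le _ _
  have h1 : (β.filter fun B => x ∈ B).card ≤ ⨆ y : A, (β.filter fun B => y ∈ B).card :=
    le_ciSup hb x
  have h2 : (⨆ y : A, (β.filter fun B => y ∈ B).card) ≤ d + 1 :=
    Nat.sub_le_iff_le_add.mp h
  exact h1.trans h2

lemma ordCover_le_of_count {β : Finset (Set A)} {d : ℕ}
    (h : ∀ x : A, (β.filter fun B => x ∈ B).card ≤ d + 1) : ordCover β ≤ d := by
  rw [ordCover, Nat.sub_le_iff_le_add]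
  exact ciSup_le' h

lemma exists_fine_refinement {d : ℕ} (hd : covDim A ≤ (d : ℝ≥0∞)) {α : Finset (Set A)}
    (hα : IsFinOpenCover α) :
    ∃ β : Finset (Set A), IsFinOpenCover β ∧ Refines β α ∧
      ∀ x : A, (β.filter fun B => x ∈ B).card ≤ d + 1 := by
  have h1 : (Dcover α : ℝ≥0∞) ≤ (d : ℝ≥0∞) := by
    refine le_trans ?_ hd
    exact le_iSup₂ (f := fun (α : Finset (Set A)) (_ : IsFinOpenCover α) => (Dcover α : ℝ≥0∞)) α hα
  have h2 : Dcover α ≤ d := by exact_mod_cast h1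
  have hne : {n | ∃ β : Finset (Set A), IsFinOpenCover β ∧ Refines β α ∧ ordCover β = n}.Nonempty :=
    ⟨ordCover α, α, hα, fun B hB => ⟨B, hB, subset_rfl⟩, rfl⟩
  obtain ⟨β, hβ, href, hord⟩ := Nat.sInf_mem hne
  exact ⟨β, hβ, href, fun x => count_le_of_ordCover_le (hord.le.trans h2) x⟩

lemma covDim_le_of_refinements {d : ℕ}
    (h : ∀ α : Finset (Set A), IsFinOpenCover α → ∃ β : Finset (Set A),
      IsFinOpenCover β ∧ Refines β α ∧ ∀ x : A, (β.filter fun B => x ∈ B).card ≤ d + 1) :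
    covDim A ≤ (d : ℝ≥0∞) := by
  rw [covDim]
  refine iSup₂_le fun α hα => ?_
  obtain ⟨β, hβ, href, hcnt⟩ := h α hα
  have : Dcover α ≤ d := by
    refine le_trans (Nat.sInf_le ⟨β, hβ, href, rfl⟩) ?_
    exact ordCover_le_of_count hcnt
  exact_mod_cast this

lemma covDim_le_floor {r : ℝ≥0∞} (hr : r ≠ ⊤) (h : covDim A ≤ r) :
    covDim A ≤ ((⌊r.toReal⌋₊ : ℕ) : ℝ≥0∞) := by
  rw [covDim] at h ⊢
  refine iSup₂_le fun α hα => ?_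
  have h1 : (Dcover α : ℝ≥0∞) ≤ r :=
    le_trans (le_iSup₂ (f := fun (α : Finset (Set A)) (_ : IsFinOpenCover α) =>
      (Dcover α : ℝ≥0∞)) α hα) h
  have h2 : Dcover α ≤ ⌊r.toReal⌋₊ := by
    refine Nat.le_floor ?_
    have := ENNReal.toReal_mono hr h1
    simpa using this
  exact_mod_cast h2

lemma floor_le_self {r : ℝ≥0∞} (hr : r ≠ ⊤) : ((⌊r.toReal⌋₊ : ℕ) : ℝ≥0∞) ≤ r := by
  have h1 : (⌊r.toReal⌋₊ : ℝ) ≤ r.toReal := Nat.floor_le ENNReal.toReal_nonneg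
  have := ENNReal.ofReal_le_ofReal h1
  rwa [ENNReal.ofReal_toReal hr, ENNReal.ofReal_natCast] at this

end CoverHelpers

section NatExtLemmas

variable {X : Type*} [TopologicalSpace X]

lemma natExt_iterate (T : X → X) {x : ℕ → X} (hx : x ∈ natExtSet T) (k m : ℕ) :
    T^[m] (x (k + m)) = x k := by
  induction m with
  | zero => rfl
  | succ m ih =>
    rw [Function.iterate_succ, Function.comp_apply]
    have : T (x (k + m + 1)) = x (k + m) := hx (k + m)
    rw [show k + (m + 1) = (k + m) + 1 from rfl, this, ih]

lemma isClosed_natExtSet [T2Space X] {T : X → X} (hT : Continuous T) :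
    IsClosed (natExtSet T) := by
  have : natExtSet T = ⋂ k : ℕ, {x : ℕ → X | T (x (k + 1)) = x k} := by
    ext x; simp [natExtSet, Set.mem_iInter]
  rw [this]
  exact isClosed_iInter fun k =>
    isClosed_eq (hT.comp (continuous_apply (k + 1))) (continuous_apply k)

lemma continuous_natExt_proj (T : X → X) (n : ℕ) :
    Continuous fun x : ↥(natExtSet T) => (x : ℕ → X) n :=
  (continuous_apply n).comp continuous_subtype_val

/-- Every finite open cover of the natural extension is refined by the preimages, under a
single projection, of finitely many open sets of `X`. -/
lemma exists_level_refinement [CompactSpace X] [T2Space X] {T : X → X} (hT : Continuous T)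
    (α : Finset (Set ↥(natExtSet T))) (hα : IsFinOpenCover α) :
    ∃ (n : ℕ) (γ : Finset (Set X)), (∀ G ∈ γ, IsOpen G) ∧
      (∀ x : ↥(natExtSet T), ∃ G ∈ γ, (x : ℕ → X) n ∈ G) ∧
      (∀ G ∈ γ, ∃ A ∈ α, {x : ↥(natExtSet T) | (x : ℕ → X) n ∈ G} ⊆ A) := by
  classical
  haveI : CompactSpace ↥(natExtSet T) :=
    isCompact_iff_compactSpace.mp (isClosed_natExtSet hT).isCompact
  -- for each point, find a basic neighborhood determined by one coordinate
  have key : ∀ x : ↥(natExtSet T), ∃ (m : ℕ) (G : Set X), IsOpen G ∧ (x : ℕ → X) m ∈ G ∧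
      ∃ A ∈ α, {y : ↥(natExtSet T) | (y : ℕ → X) m ∈ G} ⊆ A := by
    intro x
    have hx : (x : ↥(natExtSet T)) ∈ ⋃₀ (α : Set (Set ↥(natExtSet T))) := by
      rw [hα.2]; trivial
    obtain ⟨A, hAα, hxA⟩ := hx
    have hAopen : IsOpen A := hα.1 A hAα
    rw [isOpen_induced_iff] at hAopen
    obtain ⟨V, hV, hVA⟩ := hAopen
    have hxV : (x : ℕ → X) ∈ V := by rw [← hVA] at hxA; exact hxA
    obtain ⟨I, u, hu, hpi⟩ := isOpen_pi_iff.mp hV (x : ℕ → X) hxV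
    set m := I.sup id with hm
    refine ⟨m, ⋂ i ∈ I, T^[m - i] ⁻¹' u i, ?_, ?_, A, hAα, ?_⟩
    · exact isOpen_biInter_finset fun i hi => ((hu i hi).1).preimage (hT.iterate _)
    · rw [Set.mem_iInter₂]
      intro i hi
      have him : i ≤ m := Finset.le_sup (f := id) hi
      have : T^[m - i] ((x : ℕ → X) m) = (x : ℕ → X) i := by
        have := natExt_iterate T x.2 i (m - i)
        rwa [Nat.add_sub_cancel' him] at this
      simp only [Set.mem_preimage, this]
      exact (hu i hi).2
    · intro y hy
      simp only [Set.mem_setOf_eq, Set.mem_iInter₂] at hy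
      have hyV : (y : ℕ → X) ∈ V := by
        apply hpi
        intro i hi
        have him : i ≤ m := Finset.le_sup (f := id) hi
        have : T^[m - i] ((y : ℕ → X) m) = (y : ℕ → X) i := by
          have := natExt_iterate T y.2 i (m - i)
          rwa [Nat.add_sub_cancel' him] at this
        have h2 := hy i hi
        rwa [Set.mem_preimage, this] at h2
      rw [← hVA]; exact hyV
  choose m G hGopen hxG hGref using key
  -- compactness: finitely many levels suffice
  have hcover : (Set.univ : Set ↥(natExtSet T)) ⊆
      ⋃ x : ↥(natExtSet T), {y : ↥(natExtSet T) | (y : ℕ → X) (m x) ∈ G x} := by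
    intro y _
    exact Set.mem_iUnion.mpr ⟨y, hxG y⟩
  obtain ⟨t, ht⟩ := isCompact_univ.elim_finite_subcover
    (fun x : ↥(natExtSet T) => {y : ↥(natExtSet T) | (y : ℕ → X) (m x) ∈ G x})
    (fun x => (hGopen x).preimage (continuous_natExt_proj T (m x))) hcover
  set n := t.sup m with hn
  refine ⟨n, t.image fun x => T^[n - m x] ⁻¹' G x, ?_, ?_, ?_⟩
  · intro _ hGm
    obtain ⟨x, hx, rfl⟩ := Finset.mem_image.mp hGm
    exact (hGopen x).preimage (hT.iterate _)
  · intro y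
    have := ht (Set.mem_univ y)
    rw [Set.mem_iUnion₂] at this
    obtain ⟨x, hxt, hyx⟩ := this
    refine ⟨T^[n - m x] ⁻¹' G x, Finset.mem_image_of_mem _ hxt, ?_⟩
    have hmn : m x ≤ n := Finset.le_sup hxt
    have : T^[n - m x] ((y : ℕ → X) n) = (y : ℕ → X) (m x) := by
      have := natExt_iterate T y.2 (m x) (n - m x)
      rwa [Nat.add_sub_cancel' hmn] at this
    simpa [Set.mem_preimage, this] using hyx
  · intro _ hGm
    obtain ⟨x, hxt, rfl⟩ := Finset.mem_image.mp hGm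
    obtain ⟨A, hAα, hA⟩ := hGref x
    refine ⟨A, hAα, ?_⟩
    intro y hy
    apply hA
    have hmn : m x ≤ n := Finset.le_sup hxt
    have heq : T^[n - m x] ((y : ℕ → X) n) = (y : ℕ → X) (m x) := by
      have := natExt_iterate T y.2 (m x) (n - m x)
      rwa [Nat.add_sub_cancel' hmn] at this
    simp only [Set.mem_setOf_eq] at hy ⊢
    rwa [Set.mem_preimage, heq] at hy

end NatExtLemmas

section CompactHelpers

variable {X : Type*} [TopologicalSpace X]

lemma exists_subset_open_of_iInter_subset {C : ℕ → Set X} (hC : ∀ j, IsCompact (C j))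
    (hcl : ∀ j, IsClosed (C j)) (hdec : ∀ j, C (j + 1) ⊆ C j) {U : Set X} (hU : IsOpen U)
    (h : ⋂ j, C j ⊆ U) : ∃ j, C j ⊆ U := by
  by_contra hcon
  push_neg at hcon
  have hne : ∀ j, (C j \ U).Nonempty := fun j => Set.diff_nonempty.mpr (hcon j)
  have hnon := IsCompact.nonempty_iInter_of_sequence_nonempty_isCompact_isClosed
    (fun j => C j \ U) (fun j => Set.diff_subset_diff_left (hdec j)) hne
    ((hC 0).diff hU) (fun j => (hcl j).sdiff hU)
  have heq : (⋂ j, (C j \ U)) = (⋂ j, C j) \ U := by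
    ext x
    simp only [Set.mem_iInter, Set.mem_diff]
    exact ⟨fun hh => ⟨fun j => (hh j).1, (hh 0).2⟩, fun hh j => ⟨hh.1 j, hh.2⟩⟩
  rw [heq] at hnon
  obtain ⟨x, hx⟩ := hnon
  exact hx.2 (h hx.1)

end CompactHelpers

section ThickeningHelpers

variable {X : Type*} [MetricSpace X] [CompactSpace X]

lemma mem_of_forall_cthickening {C : Set X} (hC : IsClosed C) {x : X}
    (h : ∀ k : ℕ, x ∈ Metric.cthickening (1 / ((k : ℝ) + 1)) C) : x ∈ C := by
  rw [← hC.closure_eq, EMetric.mem_closure_iff_infEdist_zero]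
  by_contra h0
  have hpos : 0 < EMetric.infEdist x C := pos_iff_ne_zero.mpr h0
  obtain ⟨δ, hδ0, hδpos, hδlt⟩ := ENNReal.lt_iff_exists_real_btwn.mp hpos
  have hδ : (0 : ℝ) < δ := ENNReal.ofReal_pos.mp hδpos
  obtain ⟨k, hk⟩ := exists_nat_one_div_lt hδ
  have hxk := h k
  rw [Metric.mem_cthickening_iff] at hxk
  have h1 : ENNReal.ofReal (1 / ((k : ℝ) + 1)) < ENNReal.ofReal δ :=
    (ENNReal.ofReal_lt_ofReal_iff hδ).mpr (by exact_mod_cast hk)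
  exact absurd (hxk.trans_lt (h1.trans hδlt)) (lt_irrefl _)

lemma exists_thickening_pattern {ι : Type*} (s : Finset ι) (C : ι → Set X)
    (hC : ∀ i, IsClosed (C i)) :
    ∃ ε : ℝ, 0 < ε ∧ ∀ t ⊆ s, (⋂ i ∈ t, C i) = ∅ →
      (⋂ i ∈ t, Metric.thickening ε (C i)) = ∅ := by
  classical
  have claim : ∀ t ∈ s.powerset.filter (fun t => (⋂ i ∈ t, C i) = ∅),
      ∃ ε : ℝ, 0 < ε ∧ (⋂ i ∈ t, Metric.cthickening ε (C i)) = ∅ := by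
    intro t ht
    rw [Finset.mem_filter] at ht
    have hempty : (⋂ i ∈ t, C i) = ∅ := ht.2
    by_contra hcon
    push_neg at hcon
    have hne : ∀ k : ℕ, (⋂ i ∈ t, Metric.cthickening (1 / ((k : ℝ) + 1)) (C i)).Nonempty :=
      fun k => hcon (1 / ((k : ℝ) + 1)) (by positivity)
    have hclosed : ∀ k : ℕ, IsClosed (⋂ i ∈ t, Metric.cthickening (1 / ((k : ℝ) + 1)) (C i)) :=
      fun k => isClosed_biInter fun i _ => Metric.isClosed_cthickening
    have hdec : ∀ k : ℕ, (⋂ i ∈ t, Metric.cthickening (1 / (((k + 1) : ℕ) + (1:ℝ))) (C i)) ⊆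
        ⋂ i ∈ t, Metric.cthickening (1 / ((k : ℝ) + 1)) (C i) := by
      intro k
      refine Set.iInter₂_mono fun i _ => Metric.cthickening_mono ?_ _
      have : ((k : ℝ) + 1) ≤ ((k + 1 : ℕ) : ℝ) + 1 := by push_cast; linarith
      apply div_le_div_of_nonneg_left (by norm_num) (by positivity) this
    have hnonempty := IsCompact.nonempty_iInter_of_sequence_nonempty_isCompact_isClosed
      (fun k => ⋂ i ∈ t, Metric.cthickening (1 / ((k : ℝ) + 1)) (C i))
      hdec hne ((hclosed 0).isCompact) hclosed
    have heq : (⋂ k : ℕ, ⋂ i ∈ t, Metric.cthickening (1 / ((k : ℝ) + 1)) (C i))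
        = ⋂ i ∈ t, C i := by
      ext x
      simp only [Set.mem_iInter]
      constructor
      · intro hh i hi
        exact mem_of_forall_cthickening (hC i) (fun k => hh k i hi)
      · intro hh k i hi
        exact Metric.self_subset_cthickening _ (hh i hi)
    rw [heq, hempty] at hnonempty
    exact absurd hnonempty Set.not_nonempty_empty
  choose! ε hεpos hεempty using claim
  rcases (s.powerset.filter (fun t => (⋂ i ∈ t, C i) = ∅)).eq_empty_or_nonempty with hP | hP
  · refine ⟨1, one_pos, fun t hts hte => ?_⟩
    exfalso
    have : t ∈ s.powerset.filter (fun t => (⋂ i ∈ t, C i) = ∅) :=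
      Finset.mem_filter.mpr ⟨Finset.mem_powerset.mpr hts, hte⟩
    rw [hP] at this
    exact absurd this (Finset.notMem_empty t)
  · refine ⟨(s.powerset.filter (fun t => (⋂ i ∈ t, C i) = ∅)).inf' hP ε, ?_, ?_⟩
    · rw [Finset.lt_inf'_iff]
      exact fun t ht => hεpos t ht
    · intro t hts hte
      have htP : t ∈ s.powerset.filter (fun t => (⋂ i ∈ t, C i) = ∅) :=
        Finset.mem_filter.mpr ⟨Finset.mem_powerset.mpr hts, hte⟩
      have hle := Finset.inf'_le ε htP
      have h1 : (⋂ i ∈ t, Metric.thickening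
          ((s.powerset.filter (fun t => (⋂ i ∈ t, C i) = ∅)).inf' hP ε) (C i)) ⊆
          ⋂ i ∈ t, Metric.cthickening (ε t) (C i) :=
        Set.iInter₂_mono fun i _ =>
          (Metric.thickening_mono hle _).trans (Metric.thickening_subset_cthickening _ _)
      exact Set.subset_empty_iff.mp (h1.trans (hεempty t htP).subset)

end ThickeningHelpers

section Workhorse

lemma workhorse {X : Type*} [MetricSpace X] [CompactSpace X] (T : X → X) (hT : Continuous T)
    (Y Z : Set X) (hYc : IsClosed Y) (hZc : IsClosed Z) (hcov : Y ∪ Z = Set.univ)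
    (hTZ : T '' Z ⊆ Z) (d : ℕ)
    (hY : covDim ↥Y ≤ (d : ℝ≥0∞))
    (hW : covDim ↥(⋂ n : ℕ, T^[n] '' Z) ≤ (d : ℝ≥0∞)) :
    covDim ↥(natExtSet T) ≤ (d : ℝ≥0∞) := by
  classical
  set W : Set X := ⋂ n : ℕ, T^[n] '' Z with hWdef
  haveI hXTc : CompactSpace ↥(natExtSet T) :=
    isCompact_iff_compactSpace.mp (isClosed_natExtSet hT).isCompact
  have hTZcpt : ∀ j : ℕ, IsCompact (T^[j] '' Z) := fun j => (hZc.isCompact).image (hT.iterate j)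
  have hTZcl : ∀ j : ℕ, IsClosed (T^[j] '' Z) := fun j => (hTZcpt j).isClosed
  have hTZdec : ∀ j : ℕ, T^[j + 1] '' Z ⊆ T^[j] '' Z := by
    intro j
    rw [Function.iterate_succ, Set.image_comp]
    exact Set.image_mono hTZ
  have hWc : IsClosed W := isClosed_iInter hTZcl
  haveI hWcpt : CompactSpace ↥W := isCompact_iff_compactSpace.mp hWc.isCompact
  apply covDim_le_of_refinements
  intro α hα
  obtain ⟨n, γ, hγo, hγcov, hγref⟩ := exists_level_refinement hT α hα
  -- the image of the n-th projection
  set Kn : Set X := Set.range (fun x : ↥(natExtSet T) => (x : ℕ → X) n) with hKn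
  have hKnc : IsCompact Kn := isCompact_range (continuous_natExt_proj T n)
  have hKncl : IsClosed Kn := hKnc.isClosed
  ---- Step 1 : the Z-side
  set cW : Finset (Set ↥W) := γ.image (fun G => (Subtype.val : ↥W → X) ⁻¹' G) ∪
      {(Subtype.val : ↥W → X) ⁻¹' Knᶜ} with hcW
  have hcWo : IsFinOpenCover cW := by
    constructor
    · intro A hA
      rw [hcW, Finset.mem_union] at hA
      rcases hA with hA | hA
      · obtain ⟨G, hG, rfl⟩ := Finset.mem_image.mp hA
        exact (hγo G hG).preimage continuous_subtype_val
      · rw [Finset.mem_singleton] at hA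
        subst hA
        exact (hKncl.isOpen_compl).preimage continuous_subtype_val
    · rw [Set.eq_univ_iff_forall]
      intro w
      by_cases hw : (w : X) ∈ Kn
      · obtain ⟨x, hx⟩ := hw
        obtain ⟨G, hGγ, hxG⟩ := hγcov x
        refine ⟨Subtype.val ⁻¹' G, ?_, ?_⟩
        · exact Finset.mem_coe.mpr (Finset.mem_union_left _ (Finset.mem_image_of_mem _ hGγ))
        · rw [Set.mem_preimage]
          exact hx ▸ hxG
      · exact ⟨_, Finset.mem_coe.mpr (Finset.mem_union_right _ (Finset.mem_singleton_self _)), hw⟩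
  obtain ⟨βW, hβWoc, hβWref, hβWcnt⟩ := exists_fine_refinement hW hcWo
  have hwitW : ∀ B ∈ βW, (∃ b : ↥W, b ∈ B ∧ (b : X) ∈ Kn) →
      ∃ G ∈ γ, B ⊆ Subtype.val ⁻¹' G := by
    intro B hB hbex
    obtain ⟨A, hAcW, hBA⟩ := hβWref B hB
    rw [hcW, Finset.mem_union] at hAcW
    rcases hAcW with hA | hA
    · obtain ⟨G, hG, rfl⟩ := Finset.mem_image.mp hA
      exact ⟨G, hG, hBA⟩
    · rw [Finset.mem_singleton] at hA
      subst hA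
      obtain ⟨b, hbB, hbK⟩ := hbex
      exact absurd (hBA hbB) (by simpa using hbK)
  choose! uW huWγ huWsub using hwitW
  -- shrink the cover βW inside the compact space ↥W
  obtain ⟨v, hvcov, hvo, hvcl⟩ := exists_subset_iUnion_closure_subset (X := ↥W)
    (s := (Subtype.val : ↥W → X) ⁻¹' Kn)
    (u := fun B : Set ↥W => if B ∈ βW then B else ∅)
    (hKncl.preimage continuous_subtype_val)
    (fun B => by
      by_cases hB : B ∈ βW
      · rw [if_pos hB]; exact hβWoc.1 _ hB
      · rw [if_neg hB]; exact isOpen_empty)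
    (fun x _ => Set.Finite.subset βW.finite_toSet (by
      intro B hB
      simp only [Set.mem_setOf_eq] at hB
      by_contra hBn
      simp only [Finset.mem_coe] at hBn
      rw [if_neg hBn] at hB
      exact hB))
    (by
      intro w _
      have hw : w ∈ ⋃₀ (βW : Set (Set ↥W)) := by rw [hβWoc.2]; trivial
      obtain ⟨B, hBβ, hwB⟩ := hw
      exact Set.mem_iUnion.mpr ⟨B, by simp [Finset.mem_coe.mp hBβ, hwB]⟩)
  set CW : Set ↥W → Set X := fun B => Subtype.val '' closure (v B) with hCW
  have hCWcl : ∀ B, IsClosed (CW B) := fun B =>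
    ((isClosed_closure.isCompact).image continuous_subtype_val).isClosed
  have hCWsubW : ∀ B, CW B ⊆ W := by
    intro B x hx
    obtain ⟨b, _, rfl⟩ := hx
    exact b.2
  have hCWsubB : ∀ B ∈ βW, CW B ⊆ Subtype.val '' B := by
    intro B hB
    apply Set.image_mono
    have h := hvcl B
    rwa [if_pos hB] at h
  obtain ⟨ε, hεpos, hεpat⟩ := exists_thickening_pattern βW CW hCWcl
  have hCWord : ∀ (x : X) (t : Finset (Set ↥W)), t ⊆ βW → (∀ B ∈ t, x ∈ CW B) →
      t.card ≤ d + 1 := by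
    intro x t hts hmem
    rcases t.eq_empty_or_nonempty with rfl | ⟨B₀, hB₀⟩
    · simp
    · have hxW : x ∈ W := hCWsubW B₀ (hmem B₀ hB₀)
      have hsub : t ⊆ βW.filter (fun B => (⟨x, hxW⟩ : ↥W) ∈ B) := by
        intro B hBt
        refine Finset.mem_filter.mpr ⟨hts hBt, ?_⟩
        obtain ⟨b, hb, hbx⟩ := hCWsubB B (hts hBt) (hmem B hBt)
        have hbw : b = (⟨x, hxW⟩ : ↥W) := Subtype.ext hbx
        rwa [hbw] at hb
      exact (Finset.card_le_card hsub).trans (hβWcnt ⟨x, hxW⟩)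
  set βWk : Finset (Set ↥W) := βW.filter (fun B => ∃ b : ↥W, b ∈ B ∧ (b : X) ∈ Kn) with hβWk
  set VW : Set ↥W → Set X := fun B => Metric.thickening ε (CW B) ∩ uW B with hVW
  have hVWopen : ∀ B ∈ βWk, IsOpen (VW B) := by
    intro B hB
    rw [hβWk, Finset.mem_filter] at hB
    exact Metric.isOpen_thickening.inter (hγo _ (huWγ B hB.1 hB.2))
  have hVWsubγ : ∀ B, VW B ⊆ uW B := fun B => Set.inter_subset_right
  set U₀ : Set X := ⋃ B ∈ βWk, VW B with hU₀
  have hU₀open : IsOpen U₀ := isOpen_biUnion fun B hB => hVWopen B hB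
  have hWKn : W ∩ Kn ⊆ U₀ := by
    rintro x ⟨hxW, hxK⟩
    have hwv : (⟨x, hxW⟩ : ↥W) ∈ ⋃ B, v B := hvcov hxK
    obtain ⟨B, hvB⟩ := Set.mem_iUnion.mp hwv
    have hBβ : B ∈ βW := by
      by_contra hc
      have h := hvcl B
      rw [if_neg hc] at h
      exact absurd (h (subset_closure hvB)) (Set.notMem_empty _)
    have hwB : (⟨x, hxW⟩ : ↥W) ∈ B := by
      have h := hvcl B
      rw [if_pos hBβ] at h
      exact h (subset_closure hvB)
    have hBk : B ∈ βWk := Finset.mem_filter.mpr ⟨hBβ, ⟨⟨x, hxW⟩, hwB, hxK⟩⟩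
    refine Set.mem_biUnion hBk ⟨?_, ?_⟩
    · exact Metric.self_subset_thickening hεpos _ ⟨⟨x, hxW⟩, subset_closure hvB, rfl⟩
    · exact huWsub B hBβ ⟨⟨x, hxW⟩, hwB, hxK⟩ hwB
  have hVWcnt : ∀ x : X, (βWk.filter (fun B => x ∈ VW B)).card ≤ d + 1 := by
    intro x
    by_contra hc
    push_neg at hc
    have hts : βWk.filter (fun B => x ∈ VW B) ⊆ βW :=
      (Finset.filter_subset _ _).trans (Finset.filter_subset _ _)
    have hCne : (⋂ B ∈ βWk.filter (fun B => x ∈ VW B), CW B) ≠ ∅ := by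
      intro hemp
      have h := hεpat _ hts hemp
      have hxmem : x ∈ ⋂ B ∈ βWk.filter (fun B => x ∈ VW B), Metric.thickening ε (CW B) :=
        Set.mem_iInter₂.mpr (fun B hB => ((Finset.mem_filter.mp hB).2).1)
      rw [h] at hxmem
      exact hxmem
    obtain ⟨y, hy⟩ := Set.nonempty_iff_ne_empty.mpr hCne
    have := hCWord y _ hts (fun B hB => Set.mem_iInter₂.mp hy B hB)
    omega
  -- choose the level j by compactness
  have hiInter : (⋂ j : ℕ, (T^[j] '' Z ∩ Kn)) = W ∩ Kn := by
    rw [hWdef, ← Set.iInter_inter]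
  obtain ⟨j, hj⟩ := exists_subset_open_of_iInter_subset
    (fun j => (hTZcpt j).inter_right hKncl)
    (fun j => (hTZcl j).inter hKncl)
    (fun j => Set.inter_subset_inter_left _ (hTZdec j))
    hU₀open (by rw [hiInter]; exact hWKn)
  obtain ⟨V₀, hV₀o, hV₀s, hV₀cl⟩ := normal_exists_closure_subset
    ((hTZcl j).inter hKncl) (hU₀open.union hKncl.isOpen_compl)
    (hj.trans Set.subset_union_left)
  set F₀ : Set X := closure V₀ with hF₀
  have hF₀Kn : F₀ ∩ Kn ⊆ U₀ := by
    intro x hx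
    rcases hV₀cl hx.1 with hU | hK
    · exact hU
    · exact absurd hx.2 hK
  set R : Set X → Set X := fun G => (⋃ B ∈ βWk.filter (fun B => uW B = G), VW B) ∪ (G \ F₀)
    with hRdef
  have hRopen : ∀ G ∈ γ, IsOpen (R G) := fun G hG =>
    (isOpen_biUnion fun B hB => hVWopen B (Finset.mem_of_mem_filter _ hB)).union
      ((hγo G hG).sdiff isClosed_closure)
  have hRsubG : ∀ G, R G ⊆ G := by
    intro G x hx
    rcases hx with hx | hx
    · obtain ⟨B, hB, hxB⟩ := Set.mem_iUnion₂.mp hx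
      have heq : uW B = G := (Finset.mem_filter.mp hB).2
      exact heq ▸ (hVWsubγ B hxB)
    · exact hx.1
  have hδ1cov : ∀ x : ↥(natExtSet T), ∃ G ∈ γ, (x : ℕ → X) n ∈ R G := by
    intro x
    by_cases hxF : (x : ℕ → X) n ∈ F₀
    · have hxKn : (x : ℕ → X) n ∈ Kn := ⟨x, rfl⟩
      have hxU : (x : ℕ → X) n ∈ U₀ := hF₀Kn ⟨hxF, hxKn⟩
      obtain ⟨B, hBk, hxB⟩ := Set.mem_iUnion₂.mp hxU
      have hB := Finset.mem_filter.mp hBk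
      refine ⟨uW B, huWγ B hB.1 hB.2, Or.inl ?_⟩
      exact Set.mem_iUnion₂.mpr ⟨B, Finset.mem_filter.mpr ⟨hBk, rfl⟩, hxB⟩
    · obtain ⟨G, hG, hxG⟩ := hγcov x
      exact ⟨G, hG, Or.inr ⟨hxG, hxF⟩⟩
  ---- Step 2 : the Y-side, at level M = n + j
  set M : ℕ := n + j with hM
  have hπM : ∀ x : ↥(natExtSet T), T^[j] ((x : ℕ → X) M) = (x : ℕ → X) n :=
    fun x => natExt_iterate T x.2 n j
  set R' : Set X → Set X := fun G => T^[j] ⁻¹' (R G) with hR'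
  have hR'open : ∀ G ∈ γ, IsOpen (R' G) := fun G hG => (hRopen G hG).preimage (hT.iterate j)
  set KM : Set X := Set.range (fun x : ↥(natExtSet T) => (x : ℕ → X) M) with hKM
  have hKMc : IsCompact KM := isCompact_range (continuous_natExt_proj T M)
  have hKMcl : IsClosed KM := hKMc.isClosed
  set cY : Finset (Set ↥Y) := γ.image (fun G => (Subtype.val : ↥Y → X) ⁻¹' (R' G)) ∪
      {(Subtype.val : ↥Y → X) ⁻¹' KMᶜ} with hcY
  have hcYo : IsFinOpenCover cY := by
    constructor
    · intro A hA
      rw [hcY, Finset.mem_union] at hA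
      rcases hA with hA | hA
      · obtain ⟨G, hG, rfl⟩ := Finset.mem_image.mp hA
        exact (hR'open G hG).preimage continuous_subtype_val
      · rw [Finset.mem_singleton] at hA
        subst hA
        exact (hKMcl.isOpen_compl).preimage continuous_subtype_val
    · rw [Set.eq_univ_iff_forall]
      intro y
      by_cases hy : (y : X) ∈ KM
      · obtain ⟨x, hx⟩ := hy
        obtain ⟨G, hGγ, hxG⟩ := hδ1cov x
        refine ⟨Subtype.val ⁻¹' (R' G), ?_, ?_⟩
        · exact Finset.mem_coe.mpr (Finset.mem_union_left _ (Finset.mem_image_of_mem _ hGγ))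
        · rw [Set.mem_preimage]
          have hmem : (x : ℕ → X) M ∈ R' G := by
            rw [hR']
            simp only [Set.mem_preimage]
            rw [hπM x]
            exact hxG
          exact hx ▸ hmem
      · exact ⟨_, Finset.mem_coe.mpr (Finset.mem_union_right _ (Finset.mem_singleton_self _)), hy⟩
  obtain ⟨βY, hβYoc, hβYref, hβYcnt⟩ := exists_fine_refinement hY hcYo
  have hwitY : ∀ B ∈ βY, (∃ b : ↥Y, b ∈ B ∧ (b : X) ∈ KM) →
      ∃ G ∈ γ, B ⊆ Subtype.val ⁻¹' (R' G) := by
    intro B hB hbex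
    obtain ⟨A, hAcY, hBA⟩ := hβYref B hB
    rw [hcY, Finset.mem_union] at hAcY
    rcases hAcY with hA | hA
    · obtain ⟨G, hG, rfl⟩ := Finset.mem_image.mp hA
      exact ⟨G, hG, hBA⟩
    · rw [Finset.mem_singleton] at hA
      subst hA
      obtain ⟨b, hbB, hbK⟩ := hbex
      exact absurd (hBA hbB) (by simpa using hbK)
  choose! uY huYγ huYsub using hwitY
  have hβYopens : ∀ B ∈ βY, ∃ O : Set X, IsOpen O ∧ Subtype.val ⁻¹' O = B := fun B hB =>
    isOpen_induced_iff.mp (hβYoc.1 B hB)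
  choose! OY hOYo hOYeq using hβYopens
  set βYk : Finset (Set ↥Y) := βY.filter (fun B => ∃ b : ↥Y, b ∈ B ∧ (b : X) ∈ KM) with hβYk
  set VY : Set ↥Y → Set X := fun B => OY B ∩ R' (uY B) with hVY
  have hVYopen : ∀ B ∈ βYk, IsOpen (VY B) := by
    intro B hB
    rw [hβYk, Finset.mem_filter] at hB
    exact (hOYo B hB.1).inter (hR'open _ (huYγ B hB.1 hB.2))
  set U₁ : Set X := ⋃ B ∈ βYk, VY B with hU₁
  have hU₁open : IsOpen U₁ := isOpen_biUnion fun B hB => hVYopen B hB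
  have hYKM : Y ∩ KM ⊆ U₁ := by
    rintro x ⟨hxY, hxK⟩
    have hy : (⟨x, hxY⟩ : ↥Y) ∈ ⋃₀ (βY : Set (Set ↥Y)) := by rw [hβYoc.2]; trivial
    obtain ⟨B, hBβ, hyB⟩ := hy
    have hBβ' : B ∈ βY := Finset.mem_coe.mp hBβ
    have hBk : B ∈ βYk := Finset.mem_filter.mpr ⟨hBβ', ⟨⟨x, hxY⟩, hyB, hxK⟩⟩
    refine Set.mem_biUnion hBk ⟨?_, ?_⟩
    · have hyB' : (⟨x, hxY⟩ : ↥Y) ∈ Subtype.val ⁻¹' OY B := by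
        rw [hOYeq B hBβ']; exact hyB
      exact hyB'
    · exact huYsub B hBβ' ⟨⟨x, hxY⟩, hyB, hxK⟩ hyB
  obtain ⟨V₁, hV₁o, hV₁s, hV₁cl⟩ := normal_exists_closure_subset (hYc.inter hKMcl)
    (hU₁open.union hKMcl.isOpen_compl) (hYKM.trans Set.subset_union_left)
  set F₁ : Set X := closure V₁ with hF₁
  have hF₁KM : F₁ ∩ KM ⊆ U₁ := by
    intro x hx
    rcases hV₁cl hx.1 with hU | hK
    · exact hU
    · exact absurd hx.2 hK
  set S : Set X → Set X := fun G => (⋃ B ∈ βYk.filter (fun B => uY B = G), VY B) ∪ (R' G \ F₁)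
    with hSdef
  have hSopen : ∀ G ∈ γ, IsOpen (S G) := fun G hG =>
    (isOpen_biUnion fun B hB => hVYopen B (Finset.mem_of_mem_filter _ hB)).union
      ((hR'open G hG).sdiff isClosed_closure)
  have hSsubR' : ∀ G, S G ⊆ R' G := by
    intro G x hx
    rcases hx with hx | hx
    · obtain ⟨B, hB, hxB⟩ := Set.mem_iUnion₂.mp hx
      have heq : uY B = G := (Finset.mem_filter.mp hB).2
      have := hxB.2
      rwa [heq] at this
    · exact hx.1
  ---- The final cover
  set δf : Set X → Set ↥(natExtSet T) := fun G => {x | (x : ℕ → X) M ∈ S G} with hδf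
  have hδfsub : ∀ G, δf G ⊆ {x : ↥(natExtSet T) | (x : ℕ → X) n ∈ G} := by
    intro G x hx
    have h1 : (x : ℕ → X) M ∈ R' G := hSsubR' G hx
    have h2 : (x : ℕ → X) n ∈ R G := by
      rw [hR'] at h1
      simp only [Set.mem_preimage] at h1
      rwa [hπM x] at h1
    exact hRsubG G h2
  refine ⟨γ.image δf, ⟨?_, ?_⟩, ?_, ?_⟩
  · -- opens
    intro A hA
    obtain ⟨G, hG, rfl⟩ := Finset.mem_image.mp hA
    exact (hSopen G hG).preimage (continuous_natExt_proj T M)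
  · -- covers
    rw [Set.eq_univ_iff_forall]
    intro x
    by_cases hxF : (x : ℕ → X) M ∈ F₁
    · have hxKM : (x : ℕ → X) M ∈ KM := ⟨x, rfl⟩
      have hxU : (x : ℕ → X) M ∈ U₁ := hF₁KM ⟨hxF, hxKM⟩
      obtain ⟨B, hBk, hxB⟩ := Set.mem_iUnion₂.mp hxU
      have hB := Finset.mem_filter.mp hBk
      refine ⟨δf (uY B), ?_, ?_⟩
      · exact Finset.mem_coe.mpr (Finset.mem_image_of_mem _ (huYγ B hB.1 hB.2))
      · rw [hδf]
        simp only [Set.mem_setOf_eq]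
        exact Or.inl (Set.mem_iUnion₂.mpr ⟨B, Finset.mem_filter.mpr ⟨hBk, rfl⟩, hxB⟩)
    · obtain ⟨G, hGγ, hxG⟩ := hδ1cov x
      refine ⟨δf G, Finset.mem_coe.mpr (Finset.mem_image_of_mem _ hGγ), ?_⟩
      rw [hδf]
      simp only [Set.mem_setOf_eq]
      refine Or.inr ⟨?_, hxF⟩
      rw [hR']
      simp only [Set.mem_preimage]
      rwa [hπM x]
  · -- refines α
    intro B hB
    obtain ⟨G, hG, rfl⟩ := Finset.mem_image.mp hB
    obtain ⟨A, hAα, hGA⟩ := hγref G hG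
    exact ⟨A, hAα, (hδfsub G).trans hGA⟩
  · -- the order bound
    intro x
    have h1 : ((γ.image δf).filter (fun s => x ∈ s)) ⊆
        (γ.filter (fun G => x ∈ δf G)).image δf := by
      intro s hs
      rw [Finset.mem_filter] at hs
      obtain ⟨G, hG, rfl⟩ := Finset.mem_image.mp hs.1
      exact Finset.mem_image_of_mem _ (Finset.mem_filter.mpr ⟨hG, hs.2⟩)
    refine le_trans (Finset.card_le_card h1) (le_trans Finset.card_image_le ?_)
    have hxYZ : (x : ℕ → X) M ∈ Y ∪ Z := by rw [hcov]; trivial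
    rcases hxYZ with hxY | hxZ
    · -- Y-side count
      have hxF₁ : (x : ℕ → X) M ∈ F₁ := subset_closure (hV₁s ⟨hxY, ⟨x, rfl⟩⟩)
      have hsel : ∀ G ∈ γ.filter (fun G => x ∈ δf G),
          ∃ B ∈ βYk, uY B = G ∧ (x : ℕ → X) M ∈ VY B := by
        intro G hG
        have hxδ : (x : ℕ → X) M ∈ S G := (Finset.mem_filter.mp hG).2
        rcases hxδ with hx1 | hx2
        · obtain ⟨B, hB, hxB⟩ := Set.mem_iUnion₂.mp hx1
          have hBf := Finset.mem_filter.mp hB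
          exact ⟨B, hBf.1, hBf.2, hxB⟩
        · exact absurd hxF₁ hx2.2
      choose! φ hφk hφu hφmem using hsel
      refine le_trans (Finset.card_le_card_of_injOn φ ?_ ?_) (hβYcnt ⟨(x : ℕ → X) M, hxY⟩)
      · intro G hG
        refine Finset.mem_filter.mpr ⟨Finset.mem_of_mem_filter _ (hφk G hG), ?_⟩
        have h2 : (x : ℕ → X) M ∈ OY (φ G) := (hφmem G hG).1
        have h3 : φ G ∈ βY := Finset.mem_of_mem_filter _ (hφk G hG)
        rw [← hOYeq (φ G) h3]
        exact h2
      · intro G₁ hG₁ G₂ hG₂ heq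
        rw [← hφu G₁ hG₁, ← hφu G₂ hG₂, heq]
    · -- Z-side count
      have hxn : (x : ℕ → X) n ∈ T^[j] '' Z ∩ Kn :=
        ⟨⟨(x : ℕ → X) M, hxZ, hπM x⟩, ⟨x, rfl⟩⟩
      have hxF₀ : (x : ℕ → X) n ∈ F₀ := subset_closure (hV₀s hxn)
      have hsel : ∀ G ∈ γ.filter (fun G => x ∈ δf G),
          ∃ B ∈ βWk, uW B = G ∧ (x : ℕ → X) n ∈ VW B := by
        intro G hG
        have hxδ : (x : ℕ → X) M ∈ S G := (Finset.mem_filter.mp hG).2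
        have hxR' : (x : ℕ → X) M ∈ R' G := hSsubR' G hxδ
        have hxR : (x : ℕ → X) n ∈ R G := by
          rw [hR'] at hxR'
          simp only [Set.mem_preimage] at hxR'
          rwa [hπM x] at hxR'
        rcases hxR with hx1 | hx2
        · obtain ⟨B, hB, hxB⟩ := Set.mem_iUnion₂.mp hx1
          have hBf := Finset.mem_filter.mp hB
          exact ⟨B, hBf.1, hBf.2, hxB⟩
        · exact absurd hxF₀ hx2.2
      choose! φ hφk hφu hφmem using hsel
      refine le_trans (Finset.card_le_card_of_injOn φ ?_ ?_) (hVWcnt ((x : ℕ → X) n))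
      · intro G hG
        exact Finset.mem_filter.mpr ⟨hφk G hG, hφmem G hG⟩
      · intro G₁ hG₁ G₂ hG₂ heq
        rw [← hφu G₁ hG₁, ← hφu G₂ hG₂, heq]

end Workhorse

/-- if `X = Y ∪ Z` with `Y, Z` closed and `T(Z) ⊆ Z`, then
`dim(X̃_T) ≤ max(dim Y, dim(⋂_n T^n Z))`. -/
theorem covDim_natExt_le_max {X : Type*} [TopologicalSpace X] [CompactSpace X]
    [TopologicalSpace.MetrizableSpace X] (T : X → X) (hT : Continuous T)
    (Y Z : Set X) (hYc : IsClosed Y) (hZc : IsClosed Z) (hcov : Y ∪ Z = Set.univ)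
    (hTZ : T '' Z ⊆ Z) :
    covDim ↥(natExtSet T) ≤ max (covDim ↥Y) (covDim ↥(⋂ n : ℕ, T^[n] '' Z)) := by
  letI : MetricSpace X := TopologicalSpace.metrizableSpaceMetric X
  set r := max (covDim ↥Y) (covDim ↥(⋂ n : ℕ, T^[n] '' Z)) with hr
  rcases eq_or_ne r ⊤ with h | h
  · rw [h]; exact le_top
  have h1 : covDim ↥Y ≤ ((⌊r.toReal⌋₊ : ℕ) : ℝ≥0∞) :=
    covDim_le_floor h (le_max_left _ _)
  have h2 : covDim ↥(⋂ n : ℕ, T^[n] '' Z) ≤ ((⌊r.toReal⌋₊ : ℕ) : ℝ≥0∞) :=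
    covDim_le_floor h (le_max_right _ _)
  exact le_trans (workhorse T hT Y Z hYc hZc hcov hTZ _ h1 h2) (floor_le_self h)
end
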